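/- arXiv:1406.4021 — 2 statements merged into one kernel-verified Lean document; each statement's English description precedes it below -/
import Mathlib

section
/- Let (P, μ) be a σ-finite measure space, Y a separable metric Baire space, and (y_i)_{i∈ℕ} a dense sequence in Y. Suppose ε : ℕ × ℕ × P → ℝ is measurable with ε(i,k,ψ) > 0 for all i, k, ψ. For each ψ ∈ P define A_ψ = ⋂_{k∈ℕ} ⋃_{i∈ℕ} B_{ε(i,k,ψ)}(y_i). Then the set A = { y ∈ Y : μ({ψ ∈ P : y ∉ A_ψ}) = 0 } is residual in Y. -/
open MeasureTheory Metric ENNReal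

theorem stmt_3 {P : Type*} [MeasurableSpace P] (μ : Measure P) [SigmaFinite μ]
    {Y : Type*} [MetricSpace Y] [TopologicalSpace.SeparableSpace Y] [BaireSpace Y]
    (y : ℕ → Y) (hdense : DenseRange y)
    (ε : ℕ → ℕ → P → ℝ) (hmeas : ∀ i k, Measurable (ε i k))
    (hpos : ∀ i k ψ, 0 < ε i k ψ) :
    {x : Y | μ {ψ : P | x ∉ ⋂ k : ℕ, ⋃ i : ℕ, ball (y i) (ε i k ψ)} = 0} ∈ residual Y := by
  classical
  set S : ℕ → Set P := spanningSets μ with hS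
  set bad : ℕ → Y → Set P := fun k x => {ψ | ∀ i, ε i k ψ ≤ dist x (y i)} with hbad
  -- the open dense sets
  set U : ℕ → ℕ → ℕ → Set Y :=
    fun k n j => {x | μ.restrict (S n) (bad k x) < ((j : ℝ≥0∞) + 1)⁻¹} with hU
  have hbadmeas : ∀ k x, MeasurableSet (bad k x) := by
    intro k x
    have : bad k x = ⋂ i, ε i k ⁻¹' Set.Iic (dist x (y i)) := by
      ext ψ; simp [hbad]
    rw [this]
    exact MeasurableSet.iInter fun i => (hmeas i k) measurableSet_Iic
  have hUopen : ∀ k n j, IsOpen (U k n j) := by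
    intro k n j
    rw [Metric.isOpen_iff]
    intro x0 hx0
    -- shrinking family
    set s : ℕ → Set P :=
      fun m => {ψ | ∀ i, ε i k ψ ≤ dist x0 (y i) + ((m : ℝ) + 1)⁻¹} with hs
    have hsmeas : ∀ m, MeasurableSet (s m) := by
      intro m
      have : s m = ⋂ i, ε i k ⁻¹' Set.Iic (dist x0 (y i) + ((m : ℝ) + 1)⁻¹) := by
        ext ψ; simp [hs]
      rw [this]
      exact MeasurableSet.iInter fun i => (hmeas i k) measurableSet_Iic
    have hanti : Antitone s := by
      intro m m' hmm' ψ hψ i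
      refine le_trans (hψ i) ?_
      have : ((m' : ℝ) + 1)⁻¹ ≤ ((m : ℝ) + 1)⁻¹ := by
        apply inv_anti₀
        · positivity
        · exact_mod_cast add_le_add_left (Nat.cast_le.2 hmm') 1
      linarith
    have hiInter : (⋂ m, s m) = bad k x0 := by
      ext ψ
      simp only [Set.mem_iInter, hs, Set.mem_setOf_eq, hbad]
      constructor
      · intro h i
        by_contra hlt
        push_neg at hlt
        obtain ⟨m, hm⟩ := exists_nat_one_div_lt (sub_pos.2 hlt)
        have := h m i
        rw [one_div] at hm
        linarith
      · intro h m i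
        have : (0:ℝ) < ((m : ℝ) + 1)⁻¹ := by positivity
        linarith [h i]
    have hfin : ∃ m, μ.restrict (S n) (s m) ≠ ∞ := by
      refine ⟨0, ?_⟩
      refine ne_top_of_le_ne_top ?_ (measure_mono (Set.subset_univ _))
      rw [Measure.restrict_apply_univ]
      exact (measure_spanningSets_lt_top μ n).ne
    have htend := tendsto_measure_iInter_atTop (μ := μ.restrict (S n))
      (fun m => (hsmeas m).nullMeasurableSet) hanti hfin
    rw [hiInter] at htend
    have hx0' : μ.restrict (S n) (bad k x0) < ((j : ℝ≥0∞) + 1)⁻¹ := hx0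
    have hev := htend.eventually_lt_const hx0'
    obtain ⟨m, hm⟩ := hev.exists
    refine ⟨((m : ℝ) + 1)⁻¹, by positivity, ?_⟩
    intro x hx
    have hsub : bad k x ⊆ s m := by
      intro ψ hψ i
      have := hψ i
      have hdx : dist x (y i) ≤ dist x x0 + dist x0 (y i) := dist_triangle _ _ _
      have hxr : dist x x0 < ((m : ℝ) + 1)⁻¹ := by
        simpa [dist_comm] using hx
      simp only [hbad, Set.mem_setOf_eq] at hψ
      calc ε i k ψ ≤ dist x (y i) := hψ i
        _ ≤ dist x x0 + dist x0 (y i) := hdx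
        _ ≤ dist x0 (y i) + ((m : ℝ) + 1)⁻¹ := by linarith
    exact lt_of_le_of_lt (measure_mono hsub) hm
  have hUdense : ∀ k n j, Dense (U k n j) := by
    intro k n j
    refine Dense.mono ?_ (hdense)
    rintro _ ⟨i, rfl⟩
    have : bad k (y i) = ∅ := by
      ext ψ
      simp only [hbad, Set.mem_setOf_eq, Set.mem_empty_iff_false, iff_false]
      intro h
      have := h i
      simp at this
      exact absurd this (not_le.2 (hpos i k ψ))
    show μ.restrict (S n) (bad k (y i)) < _
    rw [this]
    simp only [measure_empty]
    exact ENNReal.inv_pos.2 (ENNReal.add_ne_top.2 ⟨ENNReal.natCast_ne_top j, one_ne_top⟩)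
  have hT : (⋂ k, ⋂ n, ⋂ j, U k n j) ∈ residual Y := by
    refine countable_iInter_mem.2 fun k => countable_iInter_mem.2 fun n =>
      countable_iInter_mem.2 fun j => ?_
    exact residual_of_dense_open (hUopen k n j) (hUdense k n j)
  refine Filter.mem_of_superset hT ?_
  intro x hx
  simp only [Set.mem_iInter] at hx
  show μ {ψ : P | x ∉ ⋂ k : ℕ, ⋃ i : ℕ, ball (y i) (ε i k ψ)} = 0
  have hset : {ψ : P | x ∉ ⋂ k : ℕ, ⋃ i : ℕ, ball (y i) (ε i k ψ)} = ⋃ k, bad k x := by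
    ext ψ
    simp only [Set.mem_setOf_eq, Set.mem_iInter, Set.mem_iUnion, not_forall, mem_ball, hbad,
      not_exists, not_lt, dist_comm]
  rw [hset]
  refine measure_iUnion_null fun k => ?_
  -- bad k x is null: null on each S n
  have hnull : ∀ n, μ (bad k x ∩ S n) = 0 := by
    intro n
    have h1 : ∀ j : ℕ, μ.restrict (S n) (bad k x) < ((j : ℝ≥0∞) + 1)⁻¹ := fun j => hx k n j
    have h0 : μ.restrict (S n) (bad k x) = 0 := by
      by_contra h
      obtain ⟨m, hm⟩ := ENNReal.exists_inv_nat_lt h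
      have := h1 m
      have hmono : ((m : ℝ≥0∞) + 1)⁻¹ ≤ ((m : ℝ≥0∞))⁻¹ := by
        gcongr; exact le_self_add
      exact absurd (lt_of_lt_of_le this hmono) (not_lt.2 hm.le)
    rwa [Measure.restrict_apply' (measurableSet_spanningSets μ n)] at h0
  have hcover : bad k x ⊆ ⋃ n, bad k x ∩ S n := by
    intro ψ hψ
    have : ψ ∈ ⋃ n, S n := by rw [hS, iUnion_spanningSets]; trivial
    obtain ⟨n, hn⟩ := Set.mem_iUnion.1 this
    exact Set.mem_iUnion.2 ⟨n, hψ, hn⟩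
  exact measure_mono_null hcover (measure_iUnion_null hnull)
end

section
/- Let (q_n) be a sequence of positive integers with q_n → ∞ and let N ∈ ℕ. Then for Lebesgue-almost every (x_1, …, x_N) ∈ ℝ^N, for every index i' ∈ {1, …, N} there exists a subsequence (q_{n_j}) such that the fractional part of q_{n_j} x_{i'} converges to 1/2 while for every i ≠ i' the distance of q_{n_j} x_i to the nearest integer converges to 0. -/
open Filter MeasureTheory Set Topology

/-- The distance from a real number to the nearest integer. -/
noncomputable def nearestIntDist (a : ℝ) : ℝ := min (Int.fract a) (1 - Int.fract a)

lemma onedim (Q : ℕ) (hQ : 0 < Q) (a b : ℝ) (ha : 0 ≤ a) (hb : b ≤ 1) (hab : a < b)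
    (c r : ℝ) :
    ENNReal.ofReal ((b - a) * (2 * r - 2 / Q)) ≤
      volume ({t : ℝ | Int.fract ((Q : ℝ) * t) ∈ Set.Ioo a b} ∩ Set.Icc (c - r) (c + r)) := by
  have hQR : (0:ℝ) < Q := by exact_mod_cast hQ
  set K : ℤ := ⌈(Q : ℝ) * (c - r)⌉ with hK
  set L : ℤ := ⌊(Q : ℝ) * (c + r)⌋ with hL
  set I : ℤ → Set ℝ := fun k => Set.Ioo (((k:ℝ) + a)/Q) (((k:ℝ) + b)/Q) with hI
  have hsub : ∀ k ∈ Finset.Ico K L, I k ⊆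
      {t : ℝ | Int.fract ((Q : ℝ) * t) ∈ Set.Ioo a b} ∩ Set.Icc (c - r) (c + r) := by
    intro k hk t ht
    rw [Finset.mem_Ico] at hk
    obtain ⟨ht1, ht2⟩ := ht
    have h1 : (k:ℝ) + a < t * Q := (div_lt_iff₀ hQR).1 ht1
    have h2 : t * Q < (k:ℝ) + b := (lt_div_iff₀ hQR).1 ht2
    have hfloor : ⌊(Q:ℝ) * t⌋ = k := by
      rw [Int.floor_eq_iff]
      constructor
      · nlinarith
      · nlinarith
    have hfr : Int.fract ((Q:ℝ) * t) = (Q:ℝ) * t - k := by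
      rw [Int.fract, hfloor]
    constructor
    · rw [Set.mem_setOf_eq, hfr]
      constructor <;> nlinarith
    · have hKk : (K:ℝ) ≤ k := by exact_mod_cast hk.1
      have hkL : (k:ℝ) + 1 ≤ L := by exact_mod_cast hk.2
      have hceil : (Q:ℝ) * (c - r) ≤ K := Int.le_ceil _
      have hfl : (L:ℝ) ≤ (Q:ℝ) * (c + r) := Int.floor_le _
      constructor <;> nlinarith
  have hdisj : (↑(Finset.Ico K L) : Set ℤ).PairwiseDisjoint I := by
    have key : ∀ k l : ℤ, k < l → Disjoint (I k) (I l) := by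
      intro k l h
      rw [hI]
      simp only [Set.Ioo_disjoint_Ioo]
      have hkl : (k:ℝ) + 1 ≤ l := by exact_mod_cast h
      have : ((k:ℝ) + b)/Q ≤ ((l:ℝ) + a)/Q := by
        apply div_le_div_of_nonneg_right ?_ hQR.le
        nlinarith
      calc min (((k:ℝ) + b)/Q) (((l:ℝ) + b)/Q) ≤ ((k:ℝ) + b)/Q := min_le_left _ _
        _ ≤ ((l:ℝ) + a)/Q := this
        _ ≤ max (((k:ℝ) + a)/Q) (((l:ℝ) + a)/Q) := le_max_right _ _
    intro k _ l _ hkl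
    rcases lt_or_gt_of_ne hkl with h | h
    · exact key k l h
    · exact (key l k h).symm
  have hmeasU : volume (⋃ k ∈ Finset.Ico K L, I k)
      = (Finset.Ico K L).card • ENNReal.ofReal ((b - a)/Q) := by
    rw [measure_biUnion_finset hdisj (fun k _ => measurableSet_Ioo)]
    rw [Finset.sum_congr rfl (fun k _ => ?_), Finset.sum_const]
    rw [hI]
    simp only [Real.volume_Ioo]
    congr 1
    rw [div_sub_div_same]
    congr 1
    ring
  have hcard : ((Finset.Ico K L).card : ℝ) ≥ 2 * Q * r - 2 := by
    rw [Int.card_Ico]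
    have h1 : ((L - K : ℤ) : ℝ) ≤ ((L - K).toNat : ℝ) := by
      exact_mod_cast Int.self_le_toNat _
    have hceil : (K:ℝ) < (Q:ℝ) * (c - r) + 1 := Int.ceil_lt_add_one _
    have hfl : (Q:ℝ) * (c + r) - 1 < (L:ℝ) := Int.sub_one_lt_floor _
    push_cast at h1 ⊢
    nlinarith
  calc ENNReal.ofReal ((b - a) * (2 * r - 2 / Q))
      ≤ (Finset.Ico K L).card • ENNReal.ofReal ((b - a)/Q) := by
        rw [nsmul_eq_mul, ← ENNReal.ofReal_natCast ((Finset.Ico K L).card),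
          ← ENNReal.ofReal_mul (by positivity)]
        apply ENNReal.ofReal_le_ofReal
        have hba : 0 < b - a := by linarith
        have e2 : ((Finset.Ico K L).card : ℝ) * ((b - a)/Q)
            = (((Finset.Ico K L).card : ℝ) * (b - a)) / Q := by ring
        rw [e2, le_div_iff₀ hQR]
        have e1 : (b - a) * (2 * r - 2 / Q) * Q = (b - a) * (2 * r * Q - 2) := by
          field_simp
        rw [e1]
        nlinarith
    _ = volume (⋃ k ∈ Finset.Ico K L, I k) := hmeasU.symm
    _ ≤ _ := measure_mono (Set.iUnion₂_subset hsub)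

lemma cube (N : ℕ) (Q : ℕ) (hQ : 0 < Q) (a b : Fin N → ℝ)
    (ha : ∀ i, 0 ≤ a i) (hb : ∀ i, b i ≤ 1) (hab : ∀ i, a i < b i)
    (x : Fin N → ℝ) (r : ℝ) (hr : 0 ≤ r) :
    ∏ i, ENNReal.ofReal ((b i - a i) * (2 * r - 2 / Q)) ≤
      volume ({y : Fin N → ℝ | ∀ i, Int.fract ((Q : ℝ) * y i) ∈ Set.Ioo (a i) (b i)}
        ∩ Metric.closedBall x r) := by
  have h1 : {y : Fin N → ℝ | ∀ i, Int.fract ((Q : ℝ) * y i) ∈ Set.Ioo (a i) (b i)}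
      = Set.pi Set.univ (fun i => {t : ℝ | Int.fract ((Q : ℝ) * t) ∈ Set.Ioo (a i) (b i)}) := by
    ext y; simp [Set.mem_pi]
  rw [h1, closedBall_pi x hr, ← Set.pi_inter_distrib, volume_pi_pi]
  refine Finset.prod_le_prod' fun i _ => ?_
  rw [Real.closedBall_eq_Icc]
  exact onedim Q hQ (a i) (b i) (ha i) (hb i) (hab i) (x i) r

lemma aefreq (q : ℕ → ℕ) (hq : ∀ n, 0 < q n) (hq' : Tendsto q atTop atTop)
    (N : ℕ) (a b : Fin N → ℝ)
    (ha : ∀ i, 0 ≤ a i) (hb : ∀ i, b i ≤ 1) (hab : ∀ i, a i < b i) :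
    ∀ᵐ x : Fin N → ℝ, ∃ᶠ n in atTop, ∀ i,
      Int.fract ((q n : ℝ) * x i) ∈ Set.Ioo (a i) (b i) := by
  set A : ℕ → Set (Fin N → ℝ) :=
    fun n => {x | ∀ i, Int.fract ((q n : ℝ) * x i) ∈ Set.Ioo (a i) (b i)} with hA
  have hAmeas : ∀ n, MeasurableSet (A n) := by
    intro n
    have : A n = ⋂ i, (fun x : Fin N → ℝ => Int.fract ((q n : ℝ) * x i)) ⁻¹'
        (Set.Ioo (a i) (b i)) := by
      ext y; simp [hA]
    rw [this]
    exact MeasurableSet.iInter fun i =>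
      (measurable_fract.comp ((measurable_pi_apply i).const_mul _)) measurableSet_Ioo
  set F : ℕ → Set (Fin N → ℝ) := fun m => {x | ∀ n, m ≤ n → x ∉ A n} with hF
  set δ : ℝ := ∏ i, (b i - a i) with hδdef
  have hδpos : 0 < δ := Finset.prod_pos fun i _ => sub_pos.2 (hab i)
  have hδle : δ ≤ 1 := by
    apply Finset.prod_le_one
    · intro i _; linarith [hab i]
    · intro i _; linarith [ha i, hb i]
  have hFzero : ∀ m, volume (F m) = 0 := by
    intro m
    -- no point can be a density point of F m
    have key : ∀ x : Fin N → ℝ,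
        ¬ Tendsto (fun r => volume (F m ∩ Metric.closedBall x r) /
            volume (Metric.closedBall x r)) (𝓝[>] 0) (𝓝 1) := by
      intro x hx
      have hbound : ∀ r : ℝ, 0 < r →
          volume (F m ∩ Metric.closedBall x r) / volume (Metric.closedBall x r) ≤
            ENNReal.ofReal (1 - δ) := by
        intro r hr
        have hball : volume (Metric.closedBall x r) = ENNReal.ofReal ((2*r)^N) := by
          rw [Real.volume_pi_closedBall x hr.le, Fintype.card_fin]
        have step : ∀ n, m ≤ n → 2 / (q n : ℝ) ≤ r →
            volume (F m ∩ Metric.closedBall x r) ≤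
              ENNReal.ofReal ((2*r)^N - δ * (2*r - 2/(q n : ℝ))^N) := by
          intro n hmn hqr
          have hqnR : (0:ℝ) < q n := by exact_mod_cast hq n
          have hfac : (0:ℝ) ≤ 2*r - 2/(q n : ℝ) := by linarith
          have hAB : ENNReal.ofReal (δ * (2*r - 2/(q n : ℝ))^N) ≤
              volume (A n ∩ Metric.closedBall x r) := by
            have := cube N (q n) (hq n) a b ha hb hab x r hr.le
            have hprod : ∏ i, ENNReal.ofReal ((b i - a i) * (2 * r - 2 / (q n : ℝ)))
                = ENNReal.ofReal (δ * (2*r - 2/(q n : ℝ))^N) := by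
              rw [← ENNReal.ofReal_prod_of_nonneg]
              · congr 1
                rw [Finset.prod_mul_distrib, Finset.prod_const, Finset.card_univ,
                  Fintype.card_fin, hδdef]
              · intro i _
                have := hab i
                nlinarith
            rw [← hprod]
            exact this
          have hcle : δ * (2*r - 2/(q n : ℝ))^N ≤ (2*r)^N := by
            have h1 : (2*r - 2/(q n : ℝ))^N ≤ (2*r)^N :=
              pow_le_pow_left₀ hfac (by linarith [div_pos (by norm_num : (0:ℝ) < 2) hqnR]) N
            nlinarith [pow_nonneg hfac N]
          have hsubF : F m ∩ Metric.closedBall x r ⊆ Metric.closedBall x r \ A n := by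
            intro y hy
            exact ⟨hy.2, hy.1 n hmn⟩
          calc volume (F m ∩ Metric.closedBall x r)
              ≤ volume (Metric.closedBall x r \ A n) := measure_mono hsubF
            _ ≤ ENNReal.ofReal ((2*r)^N) - ENNReal.ofReal (δ * (2*r - 2/(q n : ℝ))^N) := by
                have heq := measure_diff_add_inter (μ := volume) (Metric.closedBall x r) (hAmeas n)
                have hABfin : volume (Metric.closedBall x r ∩ A n) ≠ ⊤ := by
                  refine ne_top_of_le_ne_top ?_ (measure_mono Set.inter_subset_left)
                  rw [hball]; exact ENNReal.ofReal_ne_top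
                have : volume (Metric.closedBall x r \ A n)
                    = volume (Metric.closedBall x r) - volume (Metric.closedBall x r ∩ A n) :=
                  ENNReal.eq_sub_of_add_eq hABfin heq
                rw [this, hball]
                refine tsub_le_tsub le_rfl ?_
                rw [Set.inter_comm]
                exact hAB
            _ = ENNReal.ofReal ((2*r)^N - δ * (2*r - 2/(q n : ℝ))^N) :=
                (ENNReal.ofReal_sub _ (by positivity)).symm
        have ev : ∀ᶠ n in atTop, m ≤ n ∧ 2/(q n : ℝ) ≤ r := by
          have h1 : ∀ᶠ n in atTop, (⌈2/r⌉₊ : ℕ) ≤ q n := hq'.eventually_ge_atTop _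
          filter_upwards [eventually_ge_atTop m, h1] with n hn hn'
          refine ⟨hn, ?_⟩
          have hqnR : (0:ℝ) < q n := by exact_mod_cast hq n
          have : (2/r : ℝ) ≤ q n := le_trans (Nat.le_ceil _) (by exact_mod_cast hn')
          rw [div_le_iff₀ hqnR]
          rw [div_le_iff₀ hr] at this
          linarith
        have lim : Tendsto (fun n => ENNReal.ofReal ((2*r)^N - δ * (2*r - 2/(q n : ℝ))^N))
            atTop (𝓝 (ENNReal.ofReal ((2*r)^N - δ * (2*r)^N))) := by
          apply ENNReal.continuous_ofReal.continuousAt.tendsto.comp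
          have h0 : Tendsto (fun n => 2/(q n : ℝ)) atTop (𝓝 0) :=
            Tendsto.div_atTop tendsto_const_nhds (tendsto_natCast_atTop_atTop.comp hq')
          have h1 : Tendsto (fun n => 2*r - 2/(q n : ℝ)) atTop (𝓝 (2*r)) := by
            simpa using h0.const_sub (2*r)
          have h2 := (h1.pow N).const_mul δ
          simpa using h2.const_sub ((2*r)^N)
        have hle : volume (F m ∩ Metric.closedBall x r) ≤
            ENNReal.ofReal ((2*r)^N - δ * (2*r)^N) := by
          refine ge_of_tendsto lim ?_
          filter_upwards [ev] with n hn
          exact step n hn.1 hn.2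
        have hC0 : ENNReal.ofReal ((2*r)^N) ≠ 0 := by
          rw [Ne, ENNReal.ofReal_eq_zero]
          push_neg
          positivity
        calc volume (F m ∩ Metric.closedBall x r) / volume (Metric.closedBall x r)
            ≤ ENNReal.ofReal ((2*r)^N - δ * (2*r)^N) / ENNReal.ofReal ((2*r)^N) := by
              rw [hball]; exact ENNReal.div_le_div_right hle _
          _ = ENNReal.ofReal (1-δ) := by
              have : (2*r)^N - δ * (2*r)^N = (1-δ) * (2*r)^N := by ring
              rw [this, ENNReal.ofReal_mul (by linarith), mul_div_assoc,
                ENNReal.div_self hC0 ENNReal.ofReal_ne_top, mul_one]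
      have h1 : (1:ENNReal) ≤ ENNReal.ofReal (1-δ) := by
        refine le_of_tendsto hx ?_
        refine eventually_nhdsWithin_of_forall ?_
        intro r hr
        exact hbound r hr
      rw [ENNReal.one_le_ofReal] at h1
      linarith
    have hres := Besicovitch.ae_tendsto_measure_inter_div volume (F m)
    have : ∀ᵐ x ∂(volume.restrict (F m)), False := by
      filter_upwards [hres] with x hx
      exact key x hx
    have hzero : volume.restrict (F m) = 0 := by
      rw [← Measure.measure_univ_eq_zero]
      rw [ae_iff] at this
      simpa using this
    exact Measure.restrict_eq_zero.1 hzero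
  rw [ae_iff]
  refine measure_mono_null ?_ (measure_iUnion_null hFzero)
  intro x hx
  rw [Set.mem_setOf_eq, Filter.not_frequently] at hx
  rw [eventually_atTop] at hx
  obtain ⟨m, hm⟩ := hx
  exact Set.mem_iUnion.2 ⟨m, fun n hn hxa => hm n hn hxa⟩

theorem stmt_8 (q : ℕ → ℕ) (hq : ∀ n, 0 < q n) (hq' : Tendsto q atTop atTop)
    (N : ℕ) :
    ∀ᵐ x : Fin N → ℝ, ∀ i' : Fin N, ∃ φ : ℕ → ℕ, StrictMono φ ∧
      Tendsto (fun j => Int.fract ((q (φ j) : ℝ) * x i')) atTop (nhds (1 / 2)) ∧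
      ∀ i : Fin N, i ≠ i' →
        Tendsto (fun j => nearestIntDist ((q (φ j) : ℝ) * x i)) atTop (nhds 0) := by
  -- intervals depending on (i', k)
  set a : Fin N → ℕ → Fin N → ℝ :=
    fun i' k i => if i = i' then 1/2 - min (1/((k:ℝ)+1)) (1/4) else 0 with hadef
  set b : Fin N → ℕ → Fin N → ℝ :=
    fun i' k i => if i = i' then 1/2 + min (1/((k:ℝ)+1)) (1/4) else 1/((k:ℝ)+1) with hbdef
  have hkpos : ∀ k : ℕ, (0:ℝ) < 1/((k:ℝ)+1) := by
    intro k; positivity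
  have hae : ∀ᵐ x : Fin N → ℝ, ∀ i' : Fin N, ∀ k : ℕ, ∃ᶠ n in atTop, ∀ i,
      Int.fract ((q n : ℝ) * x i) ∈ Set.Ioo (a i' k i) (b i' k i) := by
    rw [ae_all_iff]
    intro i'
    rw [ae_all_iff]
    intro k
    apply aefreq q hq hq'
    · intro i
      rcases eq_or_ne i i' with h | h
      · simp only [hadef, if_pos h]
        linarith [min_le_right (1/((k:ℝ)+1)) ((1:ℝ)/4)]
      · simp only [hadef, if_neg h]
        exact le_refl 0
    · intro i
      rcases eq_or_ne i i' with h | h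
      · simp only [hbdef, if_pos h]
        linarith [min_le_right (1/((k:ℝ)+1)) ((1:ℝ)/4)]
      · simp only [hbdef, if_neg h]
        rw [div_le_one (by positivity)]
        linarith [Nat.cast_nonneg (α := ℝ) k]
    · intro i
      rcases eq_or_ne i i' with h | h
      · simp only [hadef, hbdef, if_pos h]
        have : (0:ℝ) < min (1/((k:ℝ)+1)) (1/4) := lt_min (hkpos k) (by norm_num)
        linarith
      · simp only [hadef, hbdef, if_neg h]
        exact hkpos k
  filter_upwards [hae] with x hx
  intro i'
  have hfreq : ∀ j : ℕ, ∃ᶠ n in atTop,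
      |Int.fract ((q n : ℝ) * x i') - 1/2| < 1/((j:ℝ)+1) ∧
      ∀ i, i ≠ i' → nearestIntDist ((q n : ℝ) * x i) < 1/((j:ℝ)+1) := by
    intro j
    refine (hx i' j).mono fun n hn => ?_
    constructor
    · have := hn i'
      simp only [hadef, hbdef, if_pos rfl, Set.mem_Ioo] at this
      rw [abs_sub_lt_iff]
      have hm : min (1/((j:ℝ)+1)) (1/4) ≤ 1/((j:ℝ)+1) := min_le_left _ _
      constructor <;> [linarith [this.2]; linarith [this.1]]
    · intro i hi
      have := hn i
      simp only [hadef, hbdef, if_neg hi, Set.mem_Ioo] at this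
      calc nearestIntDist ((q n : ℝ) * x i) ≤ Int.fract ((q n : ℝ) * x i) := min_le_left _ _
        _ < 1/((j:ℝ)+1) := this.2
  obtain ⟨φ, hφmono, hφ⟩ := extraction_forall_of_frequently hfreq
  refine ⟨φ, hφmono, ?_, ?_⟩
  · rw [tendsto_iff_dist_tendsto_zero]
    exact squeeze_zero (fun j => dist_nonneg)
      (fun j => by rw [Real.dist_eq]; exact (hφ j).1.le)
      tendsto_one_div_add_atTop_nhds_zero_nat
  · intro i hi
    refine squeeze_zero (fun j => ?_) (fun j => ((hφ j).2 i hi).le)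
      tendsto_one_div_add_atTop_nhds_zero_nat
    simp only [nearestIntDist]
    exact le_min (Int.fract_nonneg _) (by linarith [Int.fract_lt_one ((q (φ j) : ℝ) * x i)])
end
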